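/- arXiv:2003.12820 — 3 statements merged into one kernel-verified Lean document; each statement's English description precedes it below -/
import Mathlib

section
/- Let a₁, a₂, a₃ ≥ 2 be integers and R = ℤ[L₁,L₂,L₃]/(L₁^{a₁}-1, L₂^{a₂}-1, L₃^{a₃}-1). The ideal I = (L₁-1)(L₂-1)(L₃-1)·R is a free ℤ-module of rank (a₁-1)(a₂-1)(a₃-1), with ℤ-basis {L₁^{m₁}L₂^{m₂}L₃^{m₃}(L₁-1)(L₂-1)(L₃-1) : 0 ≤ m_i ≤ a_i - 2}. -/
open MvPolynomial

set_option synthInstance.maxHeartbeats 1000000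
set_option maxHeartbeats 1000000

/-- The representation ring `ℤ[L₁,L₂,L₃]/(L₁^{a₁}-1, L₂^{a₂}-1, L₃^{a₃}-1)`. -/
def repRing (a₁ a₂ a₃ : ℕ) : Type :=
  MvPolynomial (Fin 3) ℤ ⧸
    Ideal.span {(X 0 : MvPolynomial (Fin 3) ℤ) ^ a₁ - 1, X 1 ^ a₂ - 1, X 2 ^ a₃ - 1}

noncomputable instance (a₁ a₂ a₃ : ℕ) : CommRing (repRing a₁ a₂ a₃) :=
  Ideal.Quotient.commRing _

/-- The class of `L_i` in the representation ring. -/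
noncomputable def Lcl (a₁ a₂ a₃ : ℕ) (i : Fin 3) : repRing a₁ a₂ a₃ :=
  Ideal.Quotient.mk _ (X i)

namespace FermatAux

lemma ite_and3 (P Q R : Prop) [Decidable P] [Decidable Q] [Decidable R] :
    (if P ∧ Q ∧ R then (1 : ℤ) else 0)
      = (if P then (1 : ℤ) else 0) * (if Q then (1 : ℤ) else 0) * (if R then (1 : ℤ) else 0) := by
  split_ifs <;> simp_all

lemma geom_split {A : Type*} [CommRing A] (x : A) (n : ℕ) (hx : x ^ (n + 1) = 1) :
    x ^ n * (x - 1) = -∑ t ∈ Finset.range n, x ^ t * (x - 1) := by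
  have hgeom : (∑ t ∈ Finset.range (n + 1), x ^ t) * (x - 1) = 0 := by
    rw [geom_sum_mul, hx, sub_self]
  rw [Finset.sum_range_succ, add_mul, Finset.sum_mul] at hgeom
  exact eq_neg_of_add_eq_zero_right hgeom

variable (a₁ a₂ a₃ : ℕ)

/-- the group -/
abbrev G := ZMod a₁ × ZMod a₂ × ZMod a₃

/-- generators of the group -/
def e : Fin 3 → G a₁ a₂ a₃ :=
  ![((1 : ZMod a₁), 0, 0), (0, (1 : ZMod a₂), 0), (0, 0, (1 : ZMod a₃))]

lemma phi_aux0 : (AddMonoidAlgebra.single (e a₁ a₂ a₃ 0) (1 : ℤ)) ^ a₁ = 1 := by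
  rw [AddMonoidAlgebra.single_pow, one_pow]
  have h : a₁ • e a₁ a₂ a₃ 0 = 0 := by
    simp [e, Prod.ext_iff, nsmul_eq_mul, mul_one, ZMod.natCast_self]
  rw [h]; rfl

lemma phi_aux1 : (AddMonoidAlgebra.single (e a₁ a₂ a₃ 1) (1 : ℤ)) ^ a₂ = 1 := by
  rw [AddMonoidAlgebra.single_pow, one_pow]
  have h : a₂ • e a₁ a₂ a₃ 1 = 0 := by
    simp [e, Prod.ext_iff, nsmul_eq_mul, mul_one, ZMod.natCast_self]
  rw [h]; rfl

lemma phi_aux2 : (AddMonoidAlgebra.single (e a₁ a₂ a₃ 2) (1 : ℤ)) ^ a₃ = 1 := by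
  rw [AddMonoidAlgebra.single_pow, one_pow]
  have h : a₃ • e a₁ a₂ a₃ 2 = 0 := by
    simp [e, Prod.ext_iff, nsmul_eq_mul, mul_one, ZMod.natCast_self]
  rw [h]; rfl

/-- the ring hom from the representation ring to the group algebra -/
noncomputable def phi : repRing a₁ a₂ a₃ →+* AddMonoidAlgebra ℤ (G a₁ a₂ a₃) :=
  Ideal.Quotient.lift _
    (MvPolynomial.eval₂Hom (Int.castRingHom _) (fun i => AddMonoidAlgebra.single (e a₁ a₂ a₃ i) 1))
    (by
      intro p hp
      refine RingHom.mem_ker.mp ((Ideal.span_le (I := RingHom.ker _)).2 ?_ hp)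
      rintro q (rfl | rfl | rfl) <;> simp only [SetLike.mem_coe, RingHom.mem_ker, map_sub,
        map_pow, map_one, eval₂Hom_X']
      · rw [phi_aux0, sub_self]
      · rw [phi_aux1, sub_self]
      · rw [phi_aux2, sub_self])

lemma phi_Lcl (i : Fin 3) :
    phi a₁ a₂ a₃ (Lcl a₁ a₂ a₃ i) = AddMonoidAlgebra.single (e a₁ a₂ a₃ i) 1 := by
  show Ideal.Quotient.lift _ _ _ (Ideal.Quotient.mk _ (X i)) = _
  rw [Ideal.Quotient.lift_mk, eval₂Hom_X']

noncomputable def gg : repRing a₁ a₂ a₃ :=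
  (Lcl a₁ a₂ a₃ 0 - 1) * (Lcl a₁ a₂ a₃ 1 - 1) * (Lcl a₁ a₂ a₃ 2 - 1)

noncomputable def w (m : ℕ × ℕ × ℕ) : repRing a₁ a₂ a₃ :=
  Lcl a₁ a₂ a₃ 0 ^ m.1 * Lcl a₁ a₂ a₃ 1 ^ m.2.1 * Lcl a₁ a₂ a₃ 2 ^ m.2.2 * gg a₁ a₂ a₃

lemma Lpow0 : Lcl a₁ a₂ a₃ 0 ^ a₁ = 1 := by
  have h : Ideal.Quotient.mk (Ideal.span {(X 0 : MvPolynomial (Fin 3) ℤ) ^ a₁ - 1,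
      X 1 ^ a₂ - 1, X 2 ^ a₃ - 1}) (X 0 ^ a₁ - 1) = 0 :=
    Ideal.Quotient.eq_zero_iff_mem.mpr (Ideal.subset_span (by simp))
  rw [map_sub, map_pow, map_one, sub_eq_zero] at h
  exact h

lemma Lpow1 : Lcl a₁ a₂ a₃ 1 ^ a₂ = 1 := by
  have h : Ideal.Quotient.mk (Ideal.span {(X 0 : MvPolynomial (Fin 3) ℤ) ^ a₁ - 1,
      X 1 ^ a₂ - 1, X 2 ^ a₃ - 1}) (X 1 ^ a₂ - 1) = 0 :=
    Ideal.Quotient.eq_zero_iff_mem.mpr (Ideal.subset_span (by simp))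
  rw [map_sub, map_pow, map_one, sub_eq_zero] at h
  exact h

lemma Lpow2 : Lcl a₁ a₂ a₃ 2 ^ a₃ = 1 := by
  have h : Ideal.Quotient.mk (Ideal.span {(X 0 : MvPolynomial (Fin 3) ℤ) ^ a₁ - 1,
      X 1 ^ a₂ - 1, X 2 ^ a₃ - 1}) (X 2 ^ a₃ - 1) = 0 :=
    Ideal.Quotient.eq_zero_iff_mem.mpr (Ideal.subset_span (by simp))
  rw [map_sub, map_pow, map_one, sub_eq_zero] at h
  exact h

/-- the quotient map -/
noncomputable def mkR : MvPolynomial (Fin 3) ℤ →+* repRing a₁ a₂ a₃ :=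
  Ideal.Quotient.mk _

lemma mkR_surjective : Function.Surjective (mkR a₁ a₂ a₃) :=
  Ideal.Quotient.mk_surjective

/-- The basis family. -/
noncomputable def vv (m : Fin (a₁ - 1) × Fin (a₂ - 1) × Fin (a₃ - 1)) : repRing a₁ a₂ a₃ :=
  w a₁ a₂ a₃ (m.1.val, m.2.1.val, m.2.2.val)

/-- The span of the basis family. -/
noncomputable def NN : Submodule ℤ (repRing a₁ a₂ a₃) :=
  Submodule.span ℤ (Set.range (vv a₁ a₂ a₃))

section SpanPart

variable (h₁ : 2 ≤ a₁) (h₂ : 2 ≤ a₂) (h₃ : 2 ≤ a₃)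
include h₁ h₂ h₃

lemma genmem (m₁ m₂ m₃ : ℕ) (hm₁ : m₁ ≤ a₁ - 2) (hm₂ : m₂ ≤ a₂ - 2) (hm₃ : m₃ ≤ a₃ - 2) :
    w a₁ a₂ a₃ (m₁, m₂, m₃) ∈ NN a₁ a₂ a₃ :=
  Submodule.subset_span ⟨(⟨m₁, by omega⟩, ⟨m₂, by omega⟩, ⟨m₃, by omega⟩), rfl⟩

lemma mul0_mem (m₁ m₂ m₃ : ℕ) (hm₁ : m₁ ≤ a₁ - 2) (hm₂ : m₂ ≤ a₂ - 2) (hm₃ : m₃ ≤ a₃ - 2) :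
    Lcl a₁ a₂ a₃ 0 * w a₁ a₂ a₃ (m₁, m₂, m₃) ∈ NN a₁ a₂ a₃ := by
  rcases (by omega : m₁ < a₁ - 2 ∨ m₁ = a₁ - 2) with hlt | heq
  · have he : Lcl a₁ a₂ a₃ 0 * w a₁ a₂ a₃ (m₁, m₂, m₃) = w a₁ a₂ a₃ (m₁ + 1, m₂, m₃) := by
      simp only [w]; ring
    rw [he]; exact genmem a₁ a₂ a₃ h₁ h₂ h₃ _ _ _ (by omega) hm₂ hm₃
  · subst heq
    have hx : Lcl a₁ a₂ a₃ 0 ^ ((a₁ - 1) + 1) = 1 := by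
      rw [show a₁ - 1 + 1 = a₁ from by omega]; exact Lpow0 a₁ a₂ a₃
    have hs := geom_split (Lcl a₁ a₂ a₃ 0) (a₁ - 1) hx
    have he : Lcl a₁ a₂ a₃ 0 * w a₁ a₂ a₃ (a₁ - 2, m₂, m₃)
        = -∑ t ∈ Finset.range (a₁ - 1), w a₁ a₂ a₃ (t, m₂, m₃) := by
      have e1 : Lcl a₁ a₂ a₃ 0 * w a₁ a₂ a₃ (a₁ - 2, m₂, m₃)
          = (Lcl a₁ a₂ a₃ 0 ^ (a₁ - 1) * (Lcl a₁ a₂ a₃ 0 - 1)) *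
            (Lcl a₁ a₂ a₃ 1 ^ m₂ * (Lcl a₁ a₂ a₃ 1 - 1) *
              (Lcl a₁ a₂ a₃ 2 ^ m₃ * (Lcl a₁ a₂ a₃ 2 - 1))) := by
        rw [show a₁ - 1 = (a₁ - 2) + 1 from by omega]; simp only [w, gg]; ring
      rw [e1, hs, neg_mul]; erw [Finset.sum_mul]
      congr 1
      refine Finset.sum_congr rfl fun t _ => ?_
      simp only [w, gg]; ring
    rw [he]
    exact Submodule.neg_mem _ (Submodule.sum_mem _ fun t ht =>
      genmem a₁ a₂ a₃ h₁ h₂ h₃ _ _ _ (by have := Finset.mem_range.mp ht; omega) hm₂ hm₃)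

lemma mul1_mem (m₁ m₂ m₃ : ℕ) (hm₁ : m₁ ≤ a₁ - 2) (hm₂ : m₂ ≤ a₂ - 2) (hm₃ : m₃ ≤ a₃ - 2) :
    Lcl a₁ a₂ a₃ 1 * w a₁ a₂ a₃ (m₁, m₂, m₃) ∈ NN a₁ a₂ a₃ := by
  rcases (by omega : m₂ < a₂ - 2 ∨ m₂ = a₂ - 2) with hlt | heq
  · have he : Lcl a₁ a₂ a₃ 1 * w a₁ a₂ a₃ (m₁, m₂, m₃) = w a₁ a₂ a₃ (m₁, m₂ + 1, m₃) := by
      simp only [w]; ring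
    rw [he]; exact genmem a₁ a₂ a₃ h₁ h₂ h₃ _ _ _ hm₁ (by omega) hm₃
  · subst heq
    have hx : Lcl a₁ a₂ a₃ 1 ^ ((a₂ - 1) + 1) = 1 := by
      rw [show a₂ - 1 + 1 = a₂ from by omega]; exact Lpow1 a₁ a₂ a₃
    have hs := geom_split (Lcl a₁ a₂ a₃ 1) (a₂ - 1) hx
    have he : Lcl a₁ a₂ a₃ 1 * w a₁ a₂ a₃ (m₁, a₂ - 2, m₃)
        = -∑ t ∈ Finset.range (a₂ - 1), w a₁ a₂ a₃ (m₁, t, m₃) := by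
      have e1 : Lcl a₁ a₂ a₃ 1 * w a₁ a₂ a₃ (m₁, a₂ - 2, m₃)
          = (Lcl a₁ a₂ a₃ 1 ^ (a₂ - 1) * (Lcl a₁ a₂ a₃ 1 - 1)) *
            (Lcl a₁ a₂ a₃ 0 ^ m₁ * (Lcl a₁ a₂ a₃ 0 - 1) *
              (Lcl a₁ a₂ a₃ 2 ^ m₃ * (Lcl a₁ a₂ a₃ 2 - 1))) := by
        rw [show a₂ - 1 = (a₂ - 2) + 1 from by omega]; simp only [w, gg]; ring
      rw [e1, hs, neg_mul]; erw [Finset.sum_mul]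
      congr 1
      refine Finset.sum_congr rfl fun t _ => ?_
      simp only [w, gg]; ring
    rw [he]
    exact Submodule.neg_mem _ (Submodule.sum_mem _ fun t ht =>
      genmem a₁ a₂ a₃ h₁ h₂ h₃ _ _ _ hm₁ (by have := Finset.mem_range.mp ht; omega) hm₃)

lemma mul2_mem (m₁ m₂ m₃ : ℕ) (hm₁ : m₁ ≤ a₁ - 2) (hm₂ : m₂ ≤ a₂ - 2) (hm₃ : m₃ ≤ a₃ - 2) :
    Lcl a₁ a₂ a₃ 2 * w a₁ a₂ a₃ (m₁, m₂, m₃) ∈ NN a₁ a₂ a₃ := by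
  rcases (by omega : m₃ < a₃ - 2 ∨ m₃ = a₃ - 2) with hlt | heq
  · have he : Lcl a₁ a₂ a₃ 2 * w a₁ a₂ a₃ (m₁, m₂, m₃) = w a₁ a₂ a₃ (m₁, m₂, m₃ + 1) := by
      simp only [w]; ring
    rw [he]; exact genmem a₁ a₂ a₃ h₁ h₂ h₃ _ _ _ hm₁ hm₂ (by omega)
  · subst heq
    have hx : Lcl a₁ a₂ a₃ 2 ^ ((a₃ - 1) + 1) = 1 := by
      rw [show a₃ - 1 + 1 = a₃ from by omega]; exact Lpow2 a₁ a₂ a₃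
    have hs := geom_split (Lcl a₁ a₂ a₃ 2) (a₃ - 1) hx
    have he : Lcl a₁ a₂ a₃ 2 * w a₁ a₂ a₃ (m₁, m₂, a₃ - 2)
        = -∑ t ∈ Finset.range (a₃ - 1), w a₁ a₂ a₃ (m₁, m₂, t) := by
      have e1 : Lcl a₁ a₂ a₃ 2 * w a₁ a₂ a₃ (m₁, m₂, a₃ - 2)
          = (Lcl a₁ a₂ a₃ 2 ^ (a₃ - 1) * (Lcl a₁ a₂ a₃ 2 - 1)) *
            (Lcl a₁ a₂ a₃ 0 ^ m₁ * (Lcl a₁ a₂ a₃ 0 - 1) *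
              (Lcl a₁ a₂ a₃ 1 ^ m₂ * (Lcl a₁ a₂ a₃ 1 - 1))) := by
        rw [show a₃ - 1 = (a₃ - 2) + 1 from by omega]; simp only [w, gg]; ring
      rw [e1, hs, neg_mul]; erw [Finset.sum_mul]
      congr 1
      refine Finset.sum_congr rfl fun t _ => ?_
      simp only [w, gg]; ring
    rw [he]
    exact Submodule.neg_mem _ (Submodule.sum_mem _ fun t ht =>
      genmem a₁ a₂ a₃ h₁ h₂ h₃ _ _ _ hm₁ hm₂ (by have := Finset.mem_range.mp ht; omega))

lemma Lmul_mem (i : Fin 3) (x : repRing a₁ a₂ a₃) (hx : x ∈ NN a₁ a₂ a₃) :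
    Lcl a₁ a₂ a₃ i * x ∈ NN a₁ a₂ a₃ := by
  induction hx using Submodule.span_induction with
  | mem y hy =>
    obtain ⟨m, rfl⟩ := hy
    have b1 : m.1.val ≤ a₁ - 2 := by have := m.1.isLt; omega
    have b2 : m.2.1.val ≤ a₂ - 2 := by have := m.2.1.isLt; omega
    have b3 : m.2.2.val ≤ a₃ - 2 := by have := m.2.2.isLt; omega
    fin_cases i
    · exact mul0_mem a₁ a₂ a₃ h₁ h₂ h₃ _ _ _ b1 b2 b3
    · exact mul1_mem a₁ a₂ a₃ h₁ h₂ h₃ _ _ _ b1 b2 b3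
    · exact mul2_mem a₁ a₂ a₃ h₁ h₂ h₃ _ _ _ b1 b2 b3
  | zero => rw [mul_zero]; exact Submodule.zero_mem _
  | add y z hy hz ihy ihz => rw [mul_add]; exact Submodule.add_mem _ ihy ihz
  | smul z y hy ih => rw [mul_smul_comm]; exact Submodule.smul_mem _ _ ih

lemma mk_mul_mem (p : MvPolynomial (Fin 3) ℤ) :
    ∀ x ∈ NN a₁ a₂ a₃, mkR a₁ a₂ a₃ p * x ∈ NN a₁ a₂ a₃ := by
  induction p using MvPolynomial.induction_on with
  | C z =>
    intro x hx
    have he : mkR a₁ a₂ a₃ (C z) * x = z • x := by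
      rw [show (C z : MvPolynomial (Fin 3) ℤ) = (z : MvPolynomial (Fin 3) ℤ) from
        eq_intCast MvPolynomial.C z]
      rw [map_intCast, ← zsmul_eq_mul]
    rw [he]; exact Submodule.smul_mem _ _ hx
  | add p q ihp ihq =>
    intro x hx
    rw [map_add, add_mul]
    exact Submodule.add_mem _ (ihp x hx) (ihq x hx)
  | mul_X p i ih =>
    intro x hx
    rw [map_mul]
    have he : (mkR a₁ a₂ a₃ p * mkR a₁ a₂ a₃ (X i)) * x
        = mkR a₁ a₂ a₃ p * (Lcl a₁ a₂ a₃ i * x) := by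
      rw [show mkR a₁ a₂ a₃ (X i) = Lcl a₁ a₂ a₃ i from rfl, mul_assoc]
    rw [he]
    exact ih _ (Lmul_mem a₁ a₂ a₃ h₁ h₂ h₃ i x hx)

lemma span_eq :
    (Ideal.span {gg a₁ a₂ a₃}).restrictScalars ℤ = NN a₁ a₂ a₃ := by
  apply le_antisymm
  · intro x hx
    obtain ⟨r, rfl⟩ := Ideal.mem_span_singleton'.mp hx
    obtain ⟨p, rfl⟩ := mkR_surjective a₁ a₂ a₃ r
    have hgmem : gg a₁ a₂ a₃ ∈ NN a₁ a₂ a₃ := by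
      have := genmem a₁ a₂ a₃ h₁ h₂ h₃ 0 0 0 (by omega) (by omega) (by omega)
      simpa [w] using this
    exact mk_mul_mem a₁ a₂ a₃ h₁ h₂ h₃ p _ hgmem
  · rw [NN, Submodule.span_le]
    rintro _ ⟨m, rfl⟩
    exact Ideal.mem_span_singleton'.mpr
      ⟨Lcl a₁ a₂ a₃ 0 ^ m.1.val * Lcl a₁ a₂ a₃ 1 ^ m.2.1.val * Lcl a₁ a₂ a₃ 2 ^ m.2.2.val, rfl⟩

end SpanPart

section IndepPart

variable [NeZero a₁] [NeZero a₂] [NeZero a₃]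

/-- corner sets -/
def Sset (j : ℕ × ℕ × ℕ) : Finset (G a₁ a₂ a₃) :=
  Finset.univ.filter fun g => j.1 < g.1.val ∧ j.2.1 < g.2.1.val ∧ j.2.2 < g.2.2.val

/-- summing coefficients over a corner set -/
noncomputable def lam (j : ℕ × ℕ × ℕ) : AddMonoidAlgebra ℤ (G a₁ a₂ a₃) →ₗ[ℤ] ℤ where
  toFun f := ∑ g ∈ Sset a₁ a₂ a₃ j, f.coeff g
  map_add' f f' := by
    rw [← Finset.sum_add_distrib]
    exact Finset.sum_congr rfl fun g _ => rfl
  map_smul' z f := by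
    simp only [RingHom.id_apply, smul_eq_mul, Finset.mul_sum]
    exact Finset.sum_congr rfl fun g _ => rfl

lemma lam_single (j : ℕ × ℕ × ℕ) (g : G a₁ a₂ a₃) (c : ℤ) :
    lam a₁ a₂ a₃ j (AddMonoidAlgebra.single g c)
      = if g ∈ Sset a₁ a₂ a₃ j then c else 0 := by
  simp [lam, AddMonoidAlgebra.coeff_single, Finsupp.single_apply, Finset.sum_ite_eq]

/-- images of monomials -/
noncomputable def cmon (b : ℕ × ℕ × ℕ) : AddMonoidAlgebra ℤ (G a₁ a₂ a₃) :=
  AddMonoidAlgebra.single ((b.1 : ZMod a₁), (b.2.1 : ZMod a₂), (b.2.2 : ZMod a₃)) 1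

lemma lam_cmon (j b : ℕ × ℕ × ℕ) (hb₁ : b.1 < a₁) (hb₂ : b.2.1 < a₂) (hb₃ : b.2.2 < a₃) :
    lam a₁ a₂ a₃ j (cmon a₁ a₂ a₃ b)
      = if j.1 < b.1 ∧ j.2.1 < b.2.1 ∧ j.2.2 < b.2.2 then 1 else 0 := by
  rw [cmon, lam_single]
  simp only [Sset, Finset.mem_filter, Finset.mem_univ, true_and,
    ZMod.val_cast_of_lt hb₁, ZMod.val_cast_of_lt hb₂, ZMod.val_cast_of_lt hb₃]

lemma phi_mon (b₁ b₂ b₃ : ℕ) :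
    phi a₁ a₂ a₃ (Lcl a₁ a₂ a₃ 0 ^ b₁ * Lcl a₁ a₂ a₃ 1 ^ b₂ * Lcl a₁ a₂ a₃ 2 ^ b₃)
      = cmon a₁ a₂ a₃ (b₁, b₂, b₃) := by
  rw [map_mul, map_mul, map_pow, map_pow, map_pow, phi_Lcl, phi_Lcl, phi_Lcl,
    AddMonoidAlgebra.single_pow, AddMonoidAlgebra.single_pow, AddMonoidAlgebra.single_pow,
    AddMonoidAlgebra.single_mul_single, AddMonoidAlgebra.single_mul_single]
  simp [cmon, e, Prod.ext_iff, nsmul_eq_mul]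

lemma key (j₁ j₂ j₃ m₁ m₂ m₃ : ℕ) (hm₁ : m₁ + 1 < a₁) (hm₂ : m₂ + 1 < a₂) (hm₃ : m₃ + 1 < a₃) :
    lam a₁ a₂ a₃ (j₁, j₂, j₃) (phi a₁ a₂ a₃ (w a₁ a₂ a₃ (m₁, m₂, m₃)))
      = if j₁ = m₁ ∧ j₂ = m₂ ∧ j₃ = m₃ then 1 else 0 := by
  have L : ∀ b₁ b₂ b₃ : ℕ, b₁ < a₁ → b₂ < a₂ → b₃ < a₃ →
      lam a₁ a₂ a₃ (j₁, j₂, j₃)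
        (phi a₁ a₂ a₃ (Lcl a₁ a₂ a₃ 0 ^ b₁ * Lcl a₁ a₂ a₃ 1 ^ b₂ * Lcl a₁ a₂ a₃ 2 ^ b₃))
        = if j₁ < b₁ ∧ j₂ < b₂ ∧ j₃ < b₃ then 1 else 0 := by
    intro b₁ b₂ b₃ hb₁ hb₂ hb₃
    rw [phi_mon, lam_cmon a₁ a₂ a₃ _ _ hb₁ hb₂ hb₃]
  have hw : w a₁ a₂ a₃ (m₁, m₂, m₃) =
      (Lcl a₁ a₂ a₃ 0 ^ (m₁+1) * Lcl a₁ a₂ a₃ 1 ^ (m₂+1) * Lcl a₁ a₂ a₃ 2 ^ (m₃+1)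
        - Lcl a₁ a₂ a₃ 0 ^ m₁ * Lcl a₁ a₂ a₃ 1 ^ (m₂+1) * Lcl a₁ a₂ a₃ 2 ^ (m₃+1)
        - Lcl a₁ a₂ a₃ 0 ^ (m₁+1) * Lcl a₁ a₂ a₃ 1 ^ m₂ * Lcl a₁ a₂ a₃ 2 ^ (m₃+1)
        - Lcl a₁ a₂ a₃ 0 ^ (m₁+1) * Lcl a₁ a₂ a₃ 1 ^ (m₂+1) * Lcl a₁ a₂ a₃ 2 ^ m₃)
        + Lcl a₁ a₂ a₃ 0 ^ (m₁+1) * Lcl a₁ a₂ a₃ 1 ^ m₂ * Lcl a₁ a₂ a₃ 2 ^ m₃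
        + Lcl a₁ a₂ a₃ 0 ^ m₁ * Lcl a₁ a₂ a₃ 1 ^ (m₂+1) * Lcl a₁ a₂ a₃ 2 ^ m₃
        + Lcl a₁ a₂ a₃ 0 ^ m₁ * Lcl a₁ a₂ a₃ 1 ^ m₂ * Lcl a₁ a₂ a₃ 2 ^ (m₃+1)
        - Lcl a₁ a₂ a₃ 0 ^ m₁ * Lcl a₁ a₂ a₃ 1 ^ m₂ * Lcl a₁ a₂ a₃ 2 ^ m₃ := by
    simp only [w, gg]; ring
  rw [hw]
  simp only [map_sub, map_add]
  rw [L (m₁+1) (m₂+1) (m₃+1) (by omega) (by omega) (by omega),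
    L m₁ (m₂+1) (m₃+1) (by omega) (by omega) (by omega),
    L (m₁+1) m₂ (m₃+1) (by omega) (by omega) (by omega),
    L (m₁+1) (m₂+1) m₃ (by omega) (by omega) (by omega),
    L (m₁+1) m₂ m₃ (by omega) (by omega) (by omega),
    L m₁ (m₂+1) m₃ (by omega) (by omega) (by omega),
    L m₁ m₂ (m₃+1) (by omega) (by omega) (by omega),
    L m₁ m₂ m₃ (by omega) (by omega) (by omega)]
  have e1 : (if j₁ < m₁ + 1 then (1:ℤ) else 0) - (if j₁ < m₁ then (1:ℤ) else 0)
      = (if j₁ = m₁ then (1:ℤ) else 0) := by split_ifs <;> omega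
  have e2 : (if j₂ < m₂ + 1 then (1:ℤ) else 0) - (if j₂ < m₂ then (1:ℤ) else 0)
      = (if j₂ = m₂ then (1:ℤ) else 0) := by split_ifs <;> omega
  have e3 : (if j₃ < m₃ + 1 then (1:ℤ) else 0) - (if j₃ < m₃ then (1:ℤ) else 0)
      = (if j₃ = m₃ then (1:ℤ) else 0) := by split_ifs <;> omega
  simp only [ite_and3]
  rw [← e1, ← e2, ← e3]
  ring

lemma lin_indep (h₁ : 2 ≤ a₁) (h₂ : 2 ≤ a₂) (h₃ : 2 ≤ a₃) :
    LinearIndependent ℤ (vv a₁ a₂ a₃) := by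
  refine Fintype.linearIndependent_iff.mpr ?_
  intro c hc j
  have h := congrArg (fun x : repRing a₁ a₂ a₃ =>
    lam a₁ a₂ a₃ (j.1.val, j.2.1.val, j.2.2.val) (phi a₁ a₂ a₃ x)) hc
  simp only [map_sum, map_zsmul, map_zero] at h
  have hkey : ∀ m : Fin (a₁ - 1) × Fin (a₂ - 1) × Fin (a₃ - 1),
      lam a₁ a₂ a₃ (j.1.val, j.2.1.val, j.2.2.val) (phi a₁ a₂ a₃ (vv a₁ a₂ a₃ m))
        = if j = m then 1 else 0 := by
    intro m
    rw [show vv a₁ a₂ a₃ m = w a₁ a₂ a₃ (m.1.val, m.2.1.val, m.2.2.val) from rfl]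
    rw [key a₁ a₂ a₃ _ _ _ _ _ _ (by have := m.1.isLt; omega) (by have := m.2.1.isLt; omega)
      (by have := m.2.2.isLt; omega)]
    refine if_congr ?_ rfl rfl
    rw [Prod.ext_iff, Prod.ext_iff, Fin.ext_iff, Fin.ext_iff, Fin.ext_iff]
  simp only [hkey, smul_eq_mul, mul_ite, mul_one, mul_zero] at h
  rw [Finset.sum_ite_eq] at h
  simpa using h

end IndepPart

end FermatAux

theorem fermat_relative_K_basis (a₁ a₂ a₃ : ℕ) (h₁ : 2 ≤ a₁) (h₂ : 2 ≤ a₂) (h₃ : 2 ≤ a₃) :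
    ∃ b : Module.Basis (Fin (a₁ - 1) × Fin (a₂ - 1) × Fin (a₃ - 1)) ℤ
        ((Ideal.span {(Lcl a₁ a₂ a₃ 0 - 1) * (Lcl a₁ a₂ a₃ 1 - 1) * (Lcl a₁ a₂ a₃ 2 - 1)}
          : Ideal (repRing a₁ a₂ a₃)).restrictScalars ℤ),
      ∀ m : Fin (a₁ - 1) × Fin (a₂ - 1) × Fin (a₃ - 1),
        (b m : repRing a₁ a₂ a₃) =
          Lcl a₁ a₂ a₃ 0 ^ (m.1 : ℕ) * Lcl a₁ a₂ a₃ 1 ^ (m.2.1 : ℕ) * Lcl a₁ a₂ a₃ 2 ^ (m.2.2 : ℕ) *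
            ((Lcl a₁ a₂ a₃ 0 - 1) * (Lcl a₁ a₂ a₃ 1 - 1) * (Lcl a₁ a₂ a₃ 2 - 1)) := by
  haveI : NeZero a₁ := ⟨by omega⟩
  haveI : NeZero a₂ := ⟨by omega⟩
  haveI : NeZero a₃ := ⟨by omega⟩
  have hli : LinearIndependent ℤ (FermatAux.vv a₁ a₂ a₃) :=
    FermatAux.lin_indep a₁ a₂ a₃ h₁ h₂ h₃
  have hsp : Submodule.span ℤ (Set.range (FermatAux.vv a₁ a₂ a₃))
      = (Ideal.span {(Lcl a₁ a₂ a₃ 0 - 1) * (Lcl a₁ a₂ a₃ 1 - 1) * (Lcl a₁ a₂ a₃ 2 - 1)}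
          : Ideal (repRing a₁ a₂ a₃)).restrictScalars ℤ :=
    (FermatAux.span_eq a₁ a₂ a₃ h₁ h₂ h₃).symm
  refine ⟨(Module.Basis.span hli).map (LinearEquiv.ofEq _ _ hsp), fun m => ?_⟩
  rw [Module.Basis.map_apply]
  rw [show ((LinearEquiv.ofEq _ _ hsp) ((Module.Basis.span hli) m) : repRing a₁ a₂ a₃)
      = ((Module.Basis.span hli) m : repRing a₁ a₂ a₃) from rfl]
  rw [Module.Basis.span_apply]
  rfl
end

section
/- Let a₁, a₂, a₃ ≥ 2 be integers and R = ℤ[L₁,L₂,L₃]/(L₁^{a₁}-1, L₂^{a₂}-1, L₃^{a₃}-1), and I the ideal generated by (L₁-1)(L₂-1)(L₃-1). If g ∈ R and m·g ∈ I for some nonzero integer m, then g ∈ I; that is, R/I is torsion free. -/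
open MvPolynomial

open MvPolynomial

namespace RepRingAux

abbrev P := MvPolynomial (Fin 3) ℤ

variable (a : Fin 3 → ℕ)

noncomputable def Jset : Set P := {X 0 ^ a 0 - 1, X 1 ^ a 1 - 1, X 2 ^ a 2 - 1}

noncomputable def J : Ideal P := Ideal.span (Jset a)

lemma gen_mem_Jset (i : Fin 3) : (X i ^ a i - 1 : P) ∈ Jset a := by
  fin_cases i <;> simp [Jset]

lemma gen_mem_J (i : Fin 3) : (X i ^ a i - 1 : P) ∈ J a :=
  Ideal.subset_span (gen_mem_Jset a i)

/-- exponent reduction -/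
noncomputable def reduce (s : Fin 3 →₀ ℕ) : Fin 3 →₀ ℕ :=
  Finsupp.equivFunOnFinite.symm fun i => s i % a i

lemma reduce_apply (s : Fin 3 →₀ ℕ) (i : Fin 3) : reduce a s i = s i % a i := rfl

noncomputable def red : P →ₗ[ℤ] P :=
  (basisMonomials (Fin 3) ℤ).constr ℤ fun s => monomial (reduce a s) 1

lemma red_monomial (s : Fin 3 →₀ ℕ) (c : ℤ) :
    red a (monomial s c) = monomial (reduce a s) c := by
  have h1 : (monomial s c : P) = c • monomial s 1 := by
    rw [smul_monomial, smul_eq_mul, mul_one]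
  have h2 : red a (monomial s 1) = monomial (reduce a s) 1 := by
    have h3 := Module.Basis.constr_basis (basisMonomials (Fin 3) ℤ) ℤ
      (fun s => (monomial (reduce a s) 1 : P)) s
    have h4 : basisMonomials (Fin 3) ℤ s = monomial s 1 := by
      rw [coe_basisMonomials]
    rw [← h4, ← h3]; rfl
  rw [h1, map_smul, h2, smul_monomial, smul_eq_mul, mul_one]

lemma reduce_add_single (s : Fin 3 →₀ ℕ) (i : Fin 3) :
    reduce a (s + Finsupp.single i (a i)) = reduce a s := by
  ext j
  rw [reduce_apply, reduce_apply, Finsupp.add_apply, Finsupp.single_apply]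
  by_cases h : i = j
  · subst h; simp [Nat.add_mod_right]
  · simp [h]

lemma red_mul_gen (i : Fin 3) (c : P) :
    red a (c * (X i ^ a i - 1)) = 0 := by
  induction c using MvPolynomial.induction_on' with
  | monomial s r =>
    have he : (monomial s r : P) * (X i ^ a i - 1)
        = monomial (s + Finsupp.single i (a i)) r - monomial s r := by
      rw [mul_sub, mul_one, X_pow_eq_monomial, monomial_mul, mul_one]
    rw [he, map_sub, red_monomial, red_monomial, reduce_add_single, sub_self]
  | add p q hp hq => rw [add_mul, map_add, hp, hq, add_zero]

lemma red_eq_zero_of_mem {G : P} (hG : G ∈ J a) : red a G = 0 := by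
  have key : ∀ c : P, red a (c * G) = 0 := by
    refine Submodule.span_induction (p := fun x _ => ∀ c : P, red a (c * x) = 0)
      ?_ ?_ ?_ ?_ hG
    · rintro x hx c
      rcases hx with h | h | h <;> subst h
      · exact red_mul_gen a 0 c
      · exact red_mul_gen a 1 c
      · exact red_mul_gen a 2 c
    · intro c; rw [mul_zero, map_zero]
    · intro x y _ _ hx hy c; rw [mul_add, map_add, hx, hy, add_zero]
    · intro r x _ hx c
      rw [smul_eq_mul, ← mul_assoc]; exact hx (c * r)
  simpa using key 1

lemma pow_sub_pow_mod_mem (i : Fin 3) (n : ℕ) :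
    (X i : P) ^ n - X i ^ (n % a i) ∈ J a := by
  obtain ⟨c, hc⟩ := sub_dvd_pow_sub_pow ((X i : P) ^ a i) 1 (n / a i)
  have h1 : ((X i : P) ^ a i) ^ (n / a i) - 1 = (X i ^ a i - 1) * c := by
    simpa using hc
  have hn : (X i : P) ^ n = ((X i ^ a i) ^ (n / a i)) * X i ^ (n % a i) := by
    rw [← pow_mul, ← pow_add, Nat.div_add_mod]
  have key : (X i : P) ^ n - X i ^ (n % a i)
      = (X i ^ a i - 1) * (c * X i ^ (n % a i)) := by
    rw [hn]; linear_combination X i ^ (n % a i) * h1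
  rw [key]
  exact Ideal.mul_mem_right _ _ (gen_mem_J a i)

lemma monomial_sub_red_mem (s : Fin 3 →₀ ℕ) (c : ℤ) :
    (monomial s c : P) - monomial (reduce a s) c ∈ J a := by
  have hm : ∀ t : Fin 3 →₀ ℕ,
      (monomial t c : P) = C c * (X 0 ^ t 0 * X 1 ^ t 1 * X 2 ^ t 2) := by
    intro t
    rw [monomial_eq]
    congr 1
    rw [Finsupp.prod_fintype _ _ (fun i => pow_zero (X i)), Fin.prod_univ_three]
  rw [hm s, hm (reduce a s), reduce_apply, reduce_apply, reduce_apply]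
  have key : C c * ((X 0:P) ^ s 0 * X 1 ^ s 1 * X 2 ^ s 2)
        - C c * (X 0 ^ (s 0 % a 0) * X 1 ^ (s 1 % a 1) * X 2 ^ (s 2 % a 2))
      = C c * ((X 0 ^ s 0 - X 0 ^ (s 0 % a 0)) * (X 1 ^ s 1 * X 2 ^ s 2))
        + C c * (X 0 ^ (s 0 % a 0) * ((X 1 ^ s 1 - X 1 ^ (s 1 % a 1)) * X 2 ^ s 2))
        + C c * ((X 0 ^ (s 0 % a 0) * X 1 ^ (s 1 % a 1)) * (X 2 ^ s 2 - X 2 ^ (s 2 % a 2))) := by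
    ring
  rw [key]
  refine Ideal.add_mem _ (Ideal.add_mem _ ?_ ?_) ?_
  · exact Ideal.mul_mem_left _ _ (Ideal.mul_mem_right _ _ (pow_sub_pow_mod_mem a 0 (s 0)))
  · exact Ideal.mul_mem_left _ _ (Ideal.mul_mem_left _ _
      (Ideal.mul_mem_right _ _ (pow_sub_pow_mod_mem a 1 (s 1))))
  · exact Ideal.mul_mem_left _ _ (Ideal.mul_mem_left _ _ (pow_sub_pow_mod_mem a 2 (s 2)))

lemma sub_red_mem (G : P) : G - red a G ∈ J a := by
  induction G using MvPolynomial.induction_on' with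
  | monomial s c => rw [red_monomial]; exact monomial_sub_red_mem a s c
  | add p q hp hq =>
    have := Ideal.add_mem _ hp hq
    have he : p - red a p + (q - red a q) = p + q - red a (p + q) := by
      rw [map_add]; ring
    rwa [he] at this

lemma J_torsionfree {m : ℤ} (hm : m ≠ 0) {G : P} (h : (m : P) * G ∈ J a) :
    G ∈ J a := by
  have h1 : red a ((m : P) * G) = 0 := red_eq_zero_of_mem a h
  have h2 : (m : P) * G = m • G := (zsmul_eq_mul G m).symm
  rw [h2, map_smul] at h1
  have h3 : (m : P) * red a G = 0 := by rw [← zsmul_eq_mul]; exact h1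
  have h4 : red a G = 0 := by
    rcases mul_eq_zero.mp h3 with h' | h'
    · exact absurd (Int.cast_eq_zero.mp h') hm
    · exact h'
  have := sub_red_mem a G
  rwa [h4, sub_zero] at this

/-- substitution X i ↦ 1 -/
noncomputable def sub1 (i : Fin 3) : P →ₐ[ℤ] P :=
  aeval fun j => if j = i then 1 else X j

lemma sub1_X_self (i : Fin 3) : sub1 i (X i) = 1 := by simp [sub1]

lemma sub1_X_ne (i j : Fin 3) (h : j ≠ i) : sub1 i (X j) = X j := by
  simp [sub1, h]

lemma sub1_mem_J (i : Fin 3) {x : P} (hx : x ∈ J a) : sub1 i x ∈ J a := by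
  refine Submodule.span_induction (p := fun x _ => sub1 i x ∈ J a) ?_ ?_ ?_ ?_ hx
  · rintro x hx
    have hgen : ∀ k : Fin 3, sub1 i (X k ^ a k - 1) ∈ J a := by
      intro k
      by_cases hk : k = i
      · subst hk
        rw [map_sub, map_pow, sub1_X_self, one_pow, map_one, sub_self]
        exact Ideal.zero_mem _
      · rw [map_sub, map_pow, sub1_X_ne i k hk, map_one]
        exact gen_mem_J a k
    rcases hx with h | h | h <;> subst h
    · exact hgen 0
    · exact hgen 1
    · exact hgen 2
  · show sub1 i (0:P) ∈ J a
    rw [map_zero]; exact Ideal.zero_mem _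
  · intro x y _ _ hx hy
    show sub1 i (x + y) ∈ J a
    rw [map_add]; exact Ideal.add_mem _ hx hy
  · intro r x _ hx
    show sub1 i (r • x) ∈ J a
    rw [smul_eq_mul, map_mul]
    exact Ideal.mul_mem_left _ _ hx

lemma sub_sub1_mem (i : Fin 3) (G : P) :
    G - sub1 i G ∈ Ideal.span {(X i : P) - 1} := by
  induction G using MvPolynomial.induction_on with
  | C c =>
    rw [show (C c : P) = algebraMap ℤ P c from rfl, AlgHom.commutes, sub_self]
    exact Ideal.zero_mem _
  | add p q hp hq =>
    have := Ideal.add_mem _ hp hq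
    have he : p - sub1 i p + (q - sub1 i q) = p + q - sub1 i (p + q) := by
      rw [map_add]; ring
    rwa [he] at this
  | mul_X p j hp =>
    rw [map_mul]
    by_cases hji : j = i
    · subst hji
      have he : p * X j - sub1 j p * sub1 j (X j)
          = (p - sub1 j p) * X j + sub1 j p * (X j - 1) := by
        rw [sub1_X_self]; ring
      rw [he]
      exact Ideal.add_mem _ (Ideal.mul_mem_right _ _ hp)
        (Ideal.mul_mem_left _ _ (Ideal.mem_span_singleton_self _))
    · rw [sub1_X_ne i j hji]
      have he : p * X j - sub1 i p * X j = (p - sub1 i p) * X j := by ring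
      rw [he]
      exact Ideal.mul_mem_right _ _ hp

lemma sub_sub1_dvd (i : Fin 3) (G : P) : ∃ h : P, G - sub1 i G = (X i - 1) * h := by
  exact Ideal.mem_span_singleton.mp (sub_sub1_mem i G)

noncomputable def T (i : Fin 3) (G : P) : P := G - sub1 i G

noncomputable def Pi3 (G : P) : P := T 0 (T 1 (T 2 G))

noncomputable def sig : P := (X 0 - 1) * (X 1 - 1) * (X 2 - 1)

lemma Pi3_dvd (G : P) : ∃ h : P, Pi3 G = sig * h := by
  obtain ⟨h3, hh3⟩ := sub_sub1_dvd 2 G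
  obtain ⟨h2, hh2⟩ := sub_sub1_dvd 1 h3
  obtain ⟨h1, hh1⟩ := sub_sub1_dvd 0 h2
  refine ⟨h1, ?_⟩
  have e2 : T 2 G = (X 2 - 1) * h3 := hh3
  have e1 : T 1 (T 2 G) = (X 2 - 1) * ((X 1 - 1) * h2) := by
    rw [T, e2, map_mul, map_sub, sub1_X_ne 1 2 (by decide), map_one, ← mul_sub, hh2]
  have e0 : T 0 (T 1 (T 2 G)) = (X 2 - 1) * ((X 1 - 1) * ((X 0 - 1) * h1)) := by
    rw [T, e1, map_mul, map_mul, map_sub, map_sub, sub1_X_ne 0 2 (by decide),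
      sub1_X_ne 0 1 (by decide), map_one, ← mul_sub, ← mul_sub, hh1]
  rw [Pi3, e0, sig]; ring

lemma sub1_sig (i : Fin 3) : sub1 i sig = 0 := by
  fin_cases i <;>
    simp [sig, map_mul, map_sub, sub1_X_self, sub1_X_ne, map_one]

lemma Pi3_sig_mul (H : P) : Pi3 (sig * H) = sig * H := by
  have hT : ∀ i : Fin 3, T i (sig * H) = sig * H := by
    intro i
    rw [T, map_mul, sub1_sig, zero_mul, sub_zero]
  rw [Pi3, hT 2, hT 1, hT 0]

lemma T_add (i : Fin 3) (G G' : P) : T i (G + G') = T i G + T i G' := by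
  rw [T, T, T, map_add]; ring

lemma Pi3_add (G G' : P) : Pi3 (G + G') = Pi3 G + Pi3 G' := by
  rw [Pi3, T_add, T_add, T_add]; rfl

lemma T_intCast_mul (i : Fin 3) (m : ℤ) (G : P) :
    T i ((m : P) * G) = (m : P) * T i G := by
  rw [T, T, map_mul, map_intCast]; ring

lemma Pi3_intCast_mul (m : ℤ) (G : P) :
    Pi3 ((m : P) * G) = (m : P) * Pi3 G := by
  rw [Pi3, T_intCast_mul, T_intCast_mul, T_intCast_mul]; rfl

lemma T_mem_J (i : Fin 3) {G : P} (hG : G ∈ J a) : T i G ∈ J a :=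
  Submodule.sub_mem _ hG (sub1_mem_J a i hG)

lemma Pi3_mem_J {G : P} (hG : G ∈ J a) : Pi3 G ∈ J a :=
  T_mem_J a 0 (T_mem_J a 1 (T_mem_J a 2 hG))

end RepRingAux
open RepRingAux in
theorem repRing_quotient_torsion_free (a₁ a₂ a₃ : ℕ)
    (h₁ : 2 ≤ a₁) (h₂ : 2 ≤ a₂) (h₃ : 2 ≤ a₃)
    (g : repRing a₁ a₂ a₃) (m : ℤ) (hm : m ≠ 0)
    (h : (m : repRing a₁ a₂ a₃) * g ∈
      (Ideal.span {(Lcl a₁ a₂ a₃ 0 - 1) * (Lcl a₁ a₂ a₃ 1 - 1) * (Lcl a₁ a₂ a₃ 2 - 1)}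
        : Ideal (repRing a₁ a₂ a₃))) :
    g ∈ (Ideal.span {(Lcl a₁ a₂ a₃ 0 - 1) * (Lcl a₁ a₂ a₃ 1 - 1) * (Lcl a₁ a₂ a₃ 2 - 1)}
      : Ideal (repRing a₁ a₂ a₃)) := by
  have hJ : Ideal.span {(X 0 : MvPolynomial (Fin 3) ℤ) ^ a₁ - 1, X 1 ^ a₂ - 1, X 2 ^ a₃ - 1}
      = J ![a₁, a₂, a₃] := rfl
  have hσ : ((Lcl a₁ a₂ a₃ 0 - 1) * (Lcl a₁ a₂ a₃ 1 - 1) * (Lcl a₁ a₂ a₃ 2 - 1) : repRing a₁ a₂ a₃)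
      = Ideal.Quotient.mk _ sig := by
    simp only [Lcl, sig, map_mul, map_sub, map_one]
    rfl
  rw [hσ] at h ⊢
  obtain ⟨G, rfl⟩ := Ideal.Quotient.mk_surjective g
  obtain ⟨c, hc⟩ := Ideal.mem_span_singleton.mp h
  obtain ⟨H, rfl⟩ := Ideal.Quotient.mk_surjective c
  have hmem : (m : P) * G - sig * H ∈ J ![a₁, a₂, a₃] := by
    rw [← hJ, ← Ideal.Quotient.eq_zero_iff_mem, map_sub, map_mul, map_intCast]
    exact sub_eq_zero.mpr hc
  have h7 : Pi3 ((m : P) * G - sig * H) = (m : P) * Pi3 G - sig * H := by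
    have h8 := Pi3_add ((m : P) * G - sig * H) (sig * H)
    rw [Pi3_sig_mul] at h8
    have h9 : (m : P) * G - sig * H + sig * H = (m : P) * G := by ring
    rw [h9, Pi3_intCast_mul] at h8
    linear_combination -h8
  have h10 : (m : P) * (G - Pi3 G) ∈ J ![a₁, a₂, a₃] := by
    have h9 : (m : P) * (G - Pi3 G)
        = ((m : P) * G - sig * H) - Pi3 ((m : P) * G - sig * H) := by
      rw [h7]; ring
    rw [h9]
    exact Submodule.sub_mem _ hmem (Pi3_mem_J _ hmem)
  have h11 : G - Pi3 G ∈ J ![a₁, a₂, a₃] := J_torsionfree _ hm h10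
  obtain ⟨k, hk⟩ := Pi3_dvd G
  refine Ideal.mem_span_singleton.mpr ?_
  refine ⟨Ideal.Quotient.mk _ k, ?_⟩
  have hGk : G = sig * k + (G - Pi3 G) := by rw [← hk]; ring
  have hz : Ideal.Quotient.mk
      (Ideal.span {(X 0 : MvPolynomial (Fin 3) ℤ) ^ a₁ - 1, X 1 ^ a₂ - 1, X 2 ^ a₃ - 1})
      (G - Pi3 G) = 0 := by
    rw [Ideal.Quotient.eq_zero_iff_mem, hJ]
    exact h11
  calc Ideal.Quotient.mk _ G
      = Ideal.Quotient.mk _ (sig * k + (G - Pi3 G)) := by rw [← hGk]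
    _ = Ideal.Quotient.mk _ sig * Ideal.Quotient.mk _ k := by
        rw [map_add, map_mul, hz, add_zero]
end

section
/- Let N ≥ 2 and A = {(t₁,t₂) ∈ (ℂ*)² : t₁² = 1, t₁t₂^{N-1} = 1}. Then the representation ring ℤ[L₁,L₂]/(L₁²-1, L₁L₂^{N-1}-1) has the property that its ideal generated by (L₁-1) is a free ℤ-module of rank N-1 with basis {L₂^{i-1}(L₁-1) : 1 ≤ i ≤ N-1}. -/
open MvPolynomial

/-- The representation ring `ℤ[L₁,L₂]/(L₁²-1, L₁L₂^{N-1}-1)` of the diagonal symmetry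
group of the Berglund–Hübsch dual of the `D_N` singularity. -/
def repRingDN (N : ℕ) : Type :=
  MvPolynomial (Fin 2) ℤ ⧸
    Ideal.span {(X 0 : MvPolynomial (Fin 2) ℤ) ^ 2 - 1, X 0 * X 1 ^ (N - 1) - 1}

noncomputable instance (N : ℕ) : CommRing (repRingDN N) :=
  Ideal.Quotient.commRing _

/-- The class of `L_i` in `repRingDN N`. -/
noncomputable def LclDN (N : ℕ) (i : Fin 2) : repRingDN N :=
  Ideal.Quotient.mk _ (X i)


open MvPolynomial Polynomial

noncomputable section DNaux

namespace DNaux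

abbrev P2 : Type := MvPolynomial (Fin 2) ℤ

def Igen (M : ℕ) : Ideal P2 :=
  Ideal.span {(MvPolynomial.X 0 : P2) ^ 2 - 1, MvPolynomial.X 0 * MvPolynomial.X 1 ^ M - 1}

abbrev Q (M : ℕ) : Type := P2 ⧸ Igen M

abbrev mkq (M : ℕ) : P2 →+* Q M := Ideal.Quotient.mk (Igen M)

def p (M : ℕ) : Polynomial ℤ := Polynomial.X ^ (2 * M) - 1

abbrev S (M : ℕ) := AdjoinRoot (p M)

variable (M : ℕ)

lemma p_monic (hM : 1 ≤ M) : (p M).Monic := by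
  have := Polynomial.monic_X_pow_sub_C (1 : ℤ) (n := 2 * M) (by omega)
  simpa [p] using this

lemma p_natDegree (hM : 1 ≤ M) : (p M).natDegree = 2 * M := by
  have := Polynomial.natDegree_X_pow_sub_C (n := 2 * M) (r := (1 : ℤ))
  simpa [p] using this

lemma root_pow_2M : (AdjoinRoot.root (p M)) ^ (2 * M) = 1 := by
  have h := AdjoinRoot.mk_self (f := p M)
  rw [p, map_sub, map_pow, AdjoinRoot.mk_X, map_one, sub_eq_zero] at h
  exact h

-- relations in Q
lemma hx2 : (mkq M (MvPolynomial.X 0)) ^ 2 = 1 := by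
  have h : (mkq M) ((MvPolynomial.X 0 : P2) ^ 2 - 1) = 0 := by
    rw [Ideal.Quotient.eq_zero_iff_mem]
    exact Ideal.subset_span (Set.mem_insert _ _)
  rw [map_sub, map_pow, map_one, sub_eq_zero] at h
  exact h

lemma hxy : mkq M (MvPolynomial.X 0) * (mkq M (MvPolynomial.X 1)) ^ M = 1 := by
  have h : (mkq M) ((MvPolynomial.X 0 : P2) * MvPolynomial.X 1 ^ M - 1) = 0 := by
    rw [Ideal.Quotient.eq_zero_iff_mem]
    exact Ideal.subset_span (Set.mem_insert_of_mem _ rfl)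
  rw [map_sub, map_mul, map_pow, map_one, sub_eq_zero] at h
  exact h

lemma hyM : (mkq M (MvPolynomial.X 1)) ^ M = mkq M (MvPolynomial.X 0) := by
  set x := mkq M (MvPolynomial.X 0)
  set y := mkq M (MvPolynomial.X 1)
  calc y ^ M = x ^ 2 * y ^ M := by rw [hx2, one_mul]
    _ = x * (x * y ^ M) := by ring
    _ = x := by rw [hxy, mul_one]

lemma hy2M : (mkq M (MvPolynomial.X 1)) ^ (2 * M) = 1 := by
  rw [mul_comm, pow_mul, hyM, ← hx2 M]

/-- The `ℤ`-algebra map `Q M → S M`. -/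
def φ : Q M →ₐ[ℤ] S M :=
  Ideal.Quotient.liftₐ (Igen M)
    (MvPolynomial.aeval ![(AdjoinRoot.root (p M)) ^ M, AdjoinRoot.root (p M)])
    (by
      intro a ha
      have hker : Igen M ≤ RingHom.ker
          (MvPolynomial.aeval ![(AdjoinRoot.root (p M)) ^ M, AdjoinRoot.root (p M)] :
            P2 →ₐ[ℤ] S M) := ?_
      · exact hker ha
      refine Ideal.span_le.mpr ?_
      rintro b hb
      simp only [Set.mem_insert_iff, Set.mem_singleton_iff] at hb
      rcases hb with rfl | rfl <;>
        simp [SetLike.mem_coe, RingHom.mem_ker, ← pow_mul, mul_comm M 2, ← pow_add,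
          ← two_mul, root_pow_2M])

/-- The `ℤ`-algebra map `S M → Q M`. -/
def ψ : S M →ₐ[ℤ] Q M :=
  AdjoinRoot.liftAlgHom (p M) (Algebra.ofId ℤ (Q M)) (mkq M (MvPolynomial.X 1))
    (by simp [p, hy2M M])

lemma φ_mk_X0 : φ M (mkq M (MvPolynomial.X 0)) = (AdjoinRoot.root (p M)) ^ M := by
  change (MvPolynomial.aeval ![(AdjoinRoot.root (p M)) ^ M, AdjoinRoot.root (p M)] :
    P2 →ₐ[ℤ] S M) (MvPolynomial.X 0) = _
  simp

lemma φ_mk_X1 : φ M (mkq M (MvPolynomial.X 1)) = AdjoinRoot.root (p M) := by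
  change (MvPolynomial.aeval ![(AdjoinRoot.root (p M)) ^ M, AdjoinRoot.root (p M)] :
    P2 →ₐ[ℤ] S M) (MvPolynomial.X 1) = _
  simp

lemma ψ_root : ψ M (AdjoinRoot.root (p M)) = mkq M (MvPolynomial.X 1) := by
  exact AdjoinRoot.liftAlgHom_root _ _ _ _

/-- The `ℤ`-algebra equivalence `S M ≃ Q M`. -/
def e : S M ≃ₐ[ℤ] Q M :=
  AlgEquiv.ofAlgHom (ψ M) (φ M)
    (by
      apply Ideal.Quotient.algHom_ext
      apply MvPolynomial.algHom_ext
      intro i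
      fin_cases i
      · show (ψ M) ((φ M) (mkq M (MvPolynomial.X 0))) = mkq M (MvPolynomial.X 0)
        rw [φ_mk_X0, map_pow, ψ_root, hyM]
      · show (ψ M) ((φ M) (mkq M (MvPolynomial.X 1))) = mkq M (MvPolynomial.X 1)
        rw [φ_mk_X1, ψ_root])
    (by
      apply AdjoinRoot.algHom_ext
      show (φ M) ((ψ M) (AdjoinRoot.root (p M))) = AdjoinRoot.root (p M)
      rw [ψ_root, φ_mk_X1])

lemma e_root : e M (AdjoinRoot.root (p M)) = mkq M (MvPolynomial.X 1) := ψ_root M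

/-- ℤ-basis of `S M` by powers of the root. -/
def B (hM : 1 ≤ M) : Module.Basis (Fin (2 * M)) ℤ (S M) :=
  (AdjoinRoot.powerBasis' (p_monic M hM)).basis.reindex (finCongr (p_natDegree M hM))

lemma B_apply (hM : 1 ≤ M) (j : Fin (2 * M)) :
    B M hM j = (AdjoinRoot.root (p M)) ^ (j : ℕ) := by
  simp only [B, Module.Basis.reindex_apply, PowerBasis.coe_basis]
  rfl

/-- The element `g = root^M - 1`. -/
def gS : S M := (AdjoinRoot.root (p M)) ^ M - 1

/-- The family  `root^i * g`. -/
def w : Fin M → S M := fun i => (AdjoinRoot.root (p M)) ^ (i : ℕ) * gS M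

lemma rootM_mul_gS : (AdjoinRoot.root (p M)) ^ M * gS M = -gS M := by
  set r := AdjoinRoot.root (p M)
  have hMM : r ^ M * r ^ M = 1 := by rw [← pow_add, ← two_mul]; exact root_pow_2M M
  calc r ^ M * gS M = r ^ M * r ^ M - r ^ M := by rw [gS]; ring
    _ = 1 - r ^ M := by rw [hMM]
    _ = -gS M := by rw [gS]; ring

lemma pow_mul_gS_mem (hM : 1 ≤ M) (j : ℕ) :
    (AdjoinRoot.root (p M)) ^ j * gS M ∈ Submodule.span ℤ (Set.range (w M)) := by
  induction j using Nat.strong_induction_on with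
  | _ j ih =>
    by_cases hj : j < M
    · exact Submodule.subset_span ⟨⟨j, hj⟩, rfl⟩
    · push_neg at hj
      set r := AdjoinRoot.root (p M)
      have hsplit : j = (j - M) + M := by omega
      have hkey : r ^ j * gS M = -(r ^ (j - M) * gS M) := by
        calc r ^ j * gS M = r ^ ((j - M) + M) * gS M := by rw [← hsplit]
          _ = r ^ (j - M) * (r ^ M * gS M) := by rw [pow_add]; ring
          _ = r ^ (j - M) * (-gS M) := by rw [rootM_mul_gS]
          _ = -(r ^ (j - M) * gS M) := by ring
      rw [hkey]
      exact Submodule.neg_mem _ (ih (j - M) (by omega))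

lemma span_w_eq (hM : 1 ≤ M) :
    Submodule.span ℤ (Set.range (w M)) =
      (Ideal.span {gS M} : Ideal (S M)).restrictScalars ℤ := by
  apply le_antisymm
  · rw [Submodule.span_le]
    rintro _ ⟨i, rfl⟩
    show w M i ∈ Ideal.span {gS M}
    exact Ideal.mul_mem_left _ _ (Ideal.subset_span rfl)
  · intro x hx
    obtain ⟨a, rfl⟩ := Ideal.mem_span_singleton'.mp hx
    clear hx
    have ha : a ∈ Submodule.span ℤ (Set.range (B M hM)) := by
      rw [(B M hM).span_eq]; trivial
    induction ha using Submodule.span_induction with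
    | mem b hb =>
      obtain ⟨j, rfl⟩ := hb
      rw [B_apply]
      exact pow_mul_gS_mem M hM _
    | zero => simpa using Submodule.zero_mem _
    | add b c _ _ hb hc =>
      rw [add_mul]
      exact Submodule.add_mem _ hb hc
    | smul z b _ hb =>
      rw [smul_mul_assoc]
      exact Submodule.smul_mem _ _ hb



lemma w_eq (hM : 1 ≤ M) (i : Fin M) :
    w M i = B M hM ⟨M + i, by omega⟩ - B M hM ⟨(i : ℕ), by omega⟩ := by
  rw [B_apply, B_apply, w, gS]
  rw [pow_add]
  ring

lemma repr_w (hM : 1 ≤ M) (j i : Fin M) :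
    ((B M hM).repr (w M j)) ⟨(i : ℕ), by omega⟩ = if j = i then (-1 : ℤ) else 0 := by
  rw [w_eq M hM j, map_sub, Module.Basis.repr_self, Module.Basis.repr_self, Finsupp.sub_apply,
    Finsupp.single_apply, Finsupp.single_apply]
  rw [if_neg (by simp only [Fin.mk.injEq]; omega)]
  by_cases h : j = i
  · subst h; rw [if_pos rfl]; norm_num
  · rw [if_neg (fun hh => h (Fin.ext (by simpa [Fin.mk.injEq] using hh))), if_neg h]
    norm_num

lemma w_li (hM : 1 ≤ M) : LinearIndependent ℤ (w M) := by
  rw [Fintype.linearIndependent_iff]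
  intro c hc i
  have h := congrArg (fun s => ((B M hM).repr s) ⟨(i : ℕ), by omega⟩) hc
  simp only [map_sum, map_smul, Finsupp.coe_finset_sum, Finset.sum_apply, Finsupp.coe_smul,
    Pi.smul_apply, map_zero, Finsupp.coe_zero, Pi.zero_apply] at h
  rw [Finset.sum_congr rfl (fun j _ => by rw [repr_w M hM j i])] at h
  simpa [Finset.sum_ite_eq'] using h

theorem main (M : ℕ) (hM : 1 ≤ M) :
    ∃ b : Module.Basis (Fin M) ℤ
        ((Ideal.span {mkq M (MvPolynomial.X 0) - 1} : Ideal (Q M)).restrictScalars ℤ),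
      ∀ i : Fin M, (b i : Q M) =
        mkq M (MvPolynomial.X 1) ^ (i : ℕ) * (mkq M (MvPolynomial.X 0) - 1) := by
  set J : Ideal (S M) := Ideal.span {gS M} with hJ
  set J' : Ideal (Q M) := Ideal.span {mkq M (MvPolynomial.X 0) - 1} with hJ'
  have heg : e M (gS M) = mkq M (MvPolynomial.X 0) - 1 := by
    rw [gS, map_sub, map_one, map_pow, e_root, hyM]
  have hwmem : ∀ i : Fin M, w M i ∈ J :=
    fun i => Ideal.mul_mem_left _ _ (Ideal.subset_span rfl)
  set vJ : Fin M → (J.restrictScalars ℤ) := fun i => ⟨w M i, hwmem i⟩ with hvJ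
  have li : LinearIndependent ℤ vJ :=
    LinearIndependent.of_comp ((J.restrictScalars ℤ).subtype) (w_li M hM)
  have hmapspan : Submodule.map (J.restrictScalars ℤ).subtype
      (Submodule.span ℤ (Set.range vJ)) = Submodule.span ℤ (Set.range (w M)) := by
    rw [Submodule.map_span, ← Set.range_comp]
    rfl
  have hsp : ⊤ ≤ Submodule.span ℤ (Set.range vJ) := by
    refine le_of_eq ?_
    apply Submodule.map_injective_of_injective
      (Submodule.injective_subtype (J.restrictScalars ℤ))
    rw [Submodule.map_subtype_top, hmapspan, span_w_eq M hM]
  set bJ : Module.Basis (Fin M) ℤ (J.restrictScalars ℤ) := Module.Basis.mk li hsp with hbJ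
  set eL : S M ≃ₗ[ℤ] Q M := (e M).toLinearEquiv with heL
  have hmap : (J.restrictScalars ℤ).map (eL : S M →ₗ[ℤ] Q M) = J'.restrictScalars ℤ := by
    ext q
    simp only [Submodule.mem_map, Submodule.restrictScalars_mem]
    constructor
    · rintro ⟨s, hs, rfl⟩
      obtain ⟨a, rfl⟩ := Ideal.mem_span_singleton'.mp hs
      show e M (a * gS M) ∈ J'
      rw [map_mul, heg]
      exact Ideal.mul_mem_left _ _ (Ideal.subset_span rfl)
    · intro hq
      obtain ⟨a, ha⟩ := Ideal.mem_span_singleton'.mp hq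
      refine ⟨(e M).symm a * gS M, Ideal.mul_mem_left _ _ (Ideal.subset_span rfl), ?_⟩
      show e M ((e M).symm a * gS M) = q
      rw [map_mul, AlgEquiv.apply_symm_apply, heg, ha]
  set eqv : (J.restrictScalars ℤ) ≃ₗ[ℤ] (J'.restrictScalars ℤ) :=
    (eL.submoduleMap (J.restrictScalars ℤ)).trans (LinearEquiv.ofEq _ _ hmap) with heqv
  refine ⟨bJ.map eqv, fun i => ?_⟩
  rw [Module.Basis.map_apply, hbJ, Module.Basis.mk_apply]
  show ((LinearEquiv.ofEq _ _ hmap) ((eL.submoduleMap (J.restrictScalars ℤ)) (vJ i)) : Q M) = _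
  rw [LinearEquiv.coe_ofEq_apply]
  have : ((eL.submoduleMap (J.restrictScalars ℤ)) (vJ i) : Q M) = eL (vJ i : S M) :=
    LinearEquiv.submoduleMap_apply _ _ _
  rw [this]
  show e M (w M i) = _
  rw [w, gS, map_mul, map_pow, e_root, map_sub, map_pow, map_one, e_root, hyM]

end DNaux


theorem DN_ideal_basis (N : ℕ) (hN : 2 ≤ N) :
    ∃ b : Module.Basis (Fin (N - 1)) ℤ
        ((Ideal.span {LclDN N 0 - 1} : Ideal (repRingDN N)).restrictScalars ℤ),
      ∀ i : Fin (N - 1), (b i : repRingDN N) = LclDN N 1 ^ (i : ℕ) * (LclDN N 0 - 1) := by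
  exact DNaux.main (N - 1) (by omega)
end DNaux
end
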